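/- Let α ≥ 1 and β > 0 be real numbers and let s ≥ 1 be an integer. Then for every real z with -1 < z < 1/3, ∑_{n≥0} z^n/(αn+β)^s = β^{-s} + ∑_{j≥1} ( ∑_{m=1}^{j} C(j,m) (-1)^{j-m} (αm+β)^{-s} ) · z^j/(1-z)^{j+1}, where both series converge and C(j,m) denotes the binomial coefficient. -/

import Mathlib

/-- Series expansion of the modified Lerch transcendent function by the
generalized zeta series transformation coefficients. -/
theorem stmt_5 (α β : ℝ) (hα : 1 ≤ α) (hβ : 0 < β) (s : ℕ) (hs : 1 ≤ s)
    (z : ℝ) (hz₁ : -1 < z) (hz₂ : z < 1 / 3) :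
    Summable (fun n : ℕ => z ^ n / (α * n + β) ^ s) ∧
    Summable (fun j : ℕ =>
      (∑ m ∈ Finset.Icc 1 (j + 1),
        ((j + 1).choose m : ℝ) * (-1) ^ (j + 1 - m) / (α * m + β) ^ s) *
        z ^ (j + 1) / (1 - z) ^ (j + 2)) ∧
    (∑' n : ℕ, z ^ n / (α * n + β) ^ s) =
      1 / β ^ s +
        ∑' j : ℕ,
          (∑ m ∈ Finset.Icc 1 (j + 1),
            ((j + 1).choose m : ℝ) * (-1) ^ (j + 1 - m) / (α * m + β) ^ s) *
            z ^ (j + 1) / (1 - z) ^ (j + 2) := by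
  have hz3 : (0:ℝ) < 1 - z := by linarith
  have hz3' : (1:ℝ) - z ≠ 0 := ne_of_gt hz3
  have hβs : (0:ℝ) < β ^ s := pow_pos hβ s
  have hd : ∀ m : ℕ, (0:ℝ) < (α * m + β) ^ s := fun m => by positivity
  have hdβ : ∀ m : ℕ, β ^ s ≤ (α * m + β) ^ s := fun m => by
    apply pow_le_pow_left₀ hβ.le
    have : (0:ℝ) ≤ α * m := by positivity
    linarith
  have hzabs : 2 * |z| < 1 - z := by
    rcases abs_cases z with ⟨h, _⟩ | ⟨h, _⟩ <;> rw [h] <;> linarith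
  have hz1 : |z| < 1 := by
    rcases abs_cases z with ⟨h, _⟩ | ⟨h, _⟩ <;> rw [h] <;> linarith
  set t : ℝ := |z| / (1 - z) with ht
  have ht0 : 0 ≤ t := div_nonneg (abs_nonneg z) hz3.le
  have ht1 : t < 1 := by rw [ht, div_lt_one hz3]; linarith
  have h1t : (0:ℝ) < 1 - t := by linarith
  set x : ℝ := -z / (1 - z) with hxdef
  have hxabs : |x| = t := by
    rw [hxdef, ht, abs_div, abs_neg, abs_of_pos hz3]
  have hxnorm : ‖x‖ < 1 := by rw [Real.norm_eq_abs, hxabs]; exact ht1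
  have htnorm : ‖t‖ < 1 := by rw [Real.norm_eq_abs, abs_of_nonneg ht0]; exact ht1
  have hDm : ∀ m : ℕ, (0:ℝ) < (α * ((m:ℝ) + 1) + β) ^ s := fun m => by
    have := hd (m + 1); push_cast at this; exact this
  have hDm' : ∀ m : ℕ, ((α * ((m:ℝ) + 1) + β) ^ s : ℝ) ≠ 0 := fun m => (hDm m).ne'
  -- the double-indexed family
  set F : ℕ × ℕ → ℝ := fun p =>
    (((p.2 + (p.1 + 1)).choose (p.1 + 1) : ℕ) : ℝ) * x ^ p.2 *
      (z ^ (p.1 + 1) / ((1 - z) ^ (p.1 + 2) * (α * ((p.1 : ℝ) + 1) + β) ^ s)) with hFdef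
  -- rows of F
  have hrow : ∀ m : ℕ, HasSum (fun k : ℕ => F (m, k))
      (z ^ (m + 1) / (α * ((m:ℝ) + 1) + β) ^ s) := by
    intro m
    have h := (hasSum_choose_mul_geometric_of_norm_lt_one (m + 1) hxnorm).mul_right
      (z ^ (m + 1) / ((1 - z) ^ (m + 2) * (α * ((m:ℝ) + 1) + β) ^ s))
    have h1x : 1 - x = 1 / (1 - z) := by
      rw [hxdef]; field_simp; ring
    simp only [hFdef]
    convert h using 1
    · rfl
    rw [h1x, one_div_pow, one_div_one_div]
    field_simp
  -- absolute values
  set Fa : ℕ × ℕ → ℝ := fun p =>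
    (((p.2 + (p.1 + 1)).choose (p.1 + 1) : ℕ) : ℝ) * t ^ p.2 *
      (|z| ^ (p.1 + 1) / ((1 - z) ^ (p.1 + 2) * (α * ((p.1 : ℝ) + 1) + β) ^ s)) with hFadef
  have habs : ∀ p : ℕ × ℕ, |F p| = Fa p := by
    rintro ⟨m, k⟩
    simp only [hFdef, hFadef]
    rw [abs_mul, abs_mul, abs_pow, hxabs, abs_div, abs_pow,
      abs_of_nonneg (Nat.cast_nonneg _),
      abs_of_pos (mul_pos (pow_pos hz3 _) (hDm m))]
  set w : ℝ := 1 - z - |z| with hwdef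
  have hw0 : (0:ℝ) < w := by rw [hwdef]; linarith [abs_nonneg z]
  have h1tw : 1 - t = w / (1 - z) := by
    rw [ht, hwdef]; field_simp
  set u : ℝ := |z| / w with hudef
  have hu0 : 0 ≤ u := div_nonneg (abs_nonneg z) hw0.le
  have hu1 : u < 1 := by
    rw [hudef, div_lt_one hw0, hwdef]; linarith
  have hrowa : ∀ m : ℕ, HasSum (fun k : ℕ => Fa (m, k))
      (u ^ (m + 1) / (w * (α * ((m:ℝ) + 1) + β) ^ s)) := by
    intro m
    have h := (hasSum_choose_mul_geometric_of_norm_lt_one (m + 1) htnorm).mul_right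
      (|z| ^ (m + 1) / ((1 - z) ^ (m + 2) * (α * ((m:ℝ) + 1) + β) ^ s))
    simp only [hFadef]
    convert h using 1
    · rfl
    rw [h1tw, hudef, div_pow, div_pow]
    field_simp
    ring
  have hFa : Summable Fa := by
    rw [summable_prod_of_nonneg (by intro p; rw [← habs p]; exact abs_nonneg _)]
    constructor
    · exact fun m => (hrowa m).summable
    · apply Summable.congr (f := fun m : ℕ => u ^ (m + 1) / (w * (α * ((m:ℝ) + 1) + β) ^ s))
      · apply Summable.of_nonneg_of_le (f := fun m : ℕ => (u / (w * β ^ s)) * u ^ m)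
        · intro m
          have := hDm m
          positivity
        · intro m
          calc u ^ (m + 1) / (w * (α * ((m:ℝ) + 1) + β) ^ s)
              ≤ u ^ (m + 1) / (w * β ^ s) := by
                gcongr <;> nlinarith [Nat.cast_nonneg (α := ℝ) m, hw0, hβs, pow_pos hβ s]
            _ = u / (w * β ^ s) * u ^ m := by rw [pow_succ]; ring
        · exact (summable_geometric_of_lt_one hu0 hu1).mul_left _
      · exact fun m => ((hrowa m).tsum_eq).symm
  have hF : Summable F := Summable.of_abs (hFa.congr fun p => (habs p).symm)
  -- summability of LHS
  have hS1 : Summable (fun n : ℕ => z ^ n / (α * n + β) ^ s) := by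
    apply Summable.of_abs
    apply Summable.of_nonneg_of_le (f := fun n : ℕ => (1 / β ^ s) * |z| ^ n)
      (fun n => abs_nonneg _)
    · intro n
      rw [abs_div, abs_pow, abs_of_pos (hd n), one_div, inv_mul_eq_div]
      exact div_le_div_of_nonneg_left (pow_nonneg (abs_nonneg z) n) hβs (hdβ n)
    · exact (summable_geometric_of_lt_one (abs_nonneg z) hz1).mul_left _
  -- rows sum to the shifted LHS
  have hT : HasSum (fun m : ℕ => z ^ (m + 1) / (α * ((m:ℝ) + 1) + β) ^ s)
      (∑' p : ℕ × ℕ, F p) := hF.hasSum.prod_fiberwise hrow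
  -- diagonal regrouping
  have hFσ : Summable (F ∘ (Finset.HasAntidiagonal.sigmaAntidiagonalEquivProd (A := ℕ))) :=
    (Equiv.summable_iff _).mpr hF
  have hdiag_s : Summable (fun j : ℕ => ∑ p ∈ Finset.HasAntidiagonal.antidiagonal j, F p) := by
    have h := hFσ.sigma
    simp only [Function.comp, Finset.HasAntidiagonal.sigmaAntidiagonalEquivProd_apply] at h
    exact h.congr fun j => Finset.tsum_subtype _ _
  have hFσ' : Summable (fun σ : Σ n : ℕ, Finset.HasAntidiagonal.antidiagonal n =>
      F (Finset.HasAntidiagonal.sigmaAntidiagonalEquivProd σ)) := hFσ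
  have hdiag : (∑' p : ℕ × ℕ, F p) = ∑' j : ℕ, ∑ p ∈ Finset.HasAntidiagonal.antidiagonal j, F p := by
    rw [← (Finset.HasAntidiagonal.sigmaAntidiagonalEquivProd (A := ℕ)).tsum_eq F, Summable.tsum_sigma hFσ']
    refine tsum_congr fun j => ?_
    simp only [Finset.HasAntidiagonal.sigmaAntidiagonalEquivProd_apply]
    exact Finset.tsum_subtype _ _
  -- antidiagonal sums equal the stated terms
  have hterm : ∀ j : ℕ, (∑ p ∈ Finset.HasAntidiagonal.antidiagonal j, F p) =
      (∑ m ∈ Finset.Icc 1 (j + 1),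
        ((j + 1).choose m : ℝ) * (-1) ^ (j + 1 - m) / (α * m + β) ^ s) *
        z ^ (j + 1) / (1 - z) ^ (j + 2) := by
    intro j
    rw [Finset.Nat.sum_antidiagonal_eq_sum_range_succ_mk,
      show Finset.Icc 1 (j + 1) = Finset.Ico 1 (j + 2) from (Finset.Ico_add_one_right_eq_Icc 1 (j+1)).symm,
      Finset.sum_Ico_eq_sum_range, Finset.sum_mul, Finset.sum_div,
      show j + 2 - 1 = j + 1 from rfl]
    refine Finset.sum_congr rfl fun i hi => ?_
    rw [Finset.mem_range] at hi
    obtain ⟨k, rfl⟩ : ∃ k, j = k + i := ⟨j - i, by omega⟩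
    have e1 : k + i - i = k := by omega
    have e2 : k + i + 1 - (1 + i) = k := by omega
    have e3 : k + (i + 1) = k + i + 1 := by omega
    have e4 : 1 + i = i + 1 := by omega
    simp only [hFdef, e1, e2, e3, e4]
    push_cast
    rw [hxdef, div_pow, neg_pow]
    have hDi := hDm i
    field_simp
    rw [e1]
    ring
  -- assembly
  refine ⟨hS1, hdiag_s.congr hterm, ?_⟩
  rw [Summable.tsum_eq_zero_add hS1]
  have h0 : z ^ 0 / (α * (0:ℕ) + β) ^ s = 1 / β ^ s := by norm_num
  rw [h0]
  congr 1
  have hshift : (fun n : ℕ => z ^ (n + 1) / (α * (↑(n + 1) : ℝ) + β) ^ s)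
      = fun m : ℕ => z ^ (m + 1) / (α * ((m:ℝ) + 1) + β) ^ s := by
    funext m; push_cast; ring_nf
  rw [hshift, hT.tsum_eq, hdiag]
  exact tsum_congr hterm
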